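/- arXiv:2003.11132 — 8 statements merged into one kernel-verified Lean document; each statement's English description precedes it below -/
import Mathlib

section
/- For every integer d ≥ 1, consider the tree ensemble 𝒯_d on ℝ^d consisting of 2d−1 unit-weight trees: for each i ∈ {1,…,d}, a tree t_i whose root splits on feature i with threshold 0, with left leaf labeled class 0 and right leaf labeled class 1; and d−1 further trees each consisting of a single leaf labeled class 1. Then every decision tree T faithful to 𝒯_d on ℝ^d satisfies Φ(T) ≥ d. Since Σ_t Φ(t) = d for this ensemble, the worst-case bound Φ(T) ≤ Σ_{t∈𝒯} Φ(t) on the depth of an optimal born-again tree is tight. -/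
/-- A decision tree on `ℝ^p`: either a leaf labeled with a class `c : ℕ`,
or an internal node splitting on feature `j` with threshold `t`. -/
inductive DTree (p : ℕ) : Type where
  | leaf (c : ℕ) : DTree p
  | node (j : Fin p) (t : ℝ) (L R : DTree p) : DTree p

namespace DTree

/-- Evaluation of a decision tree at a point `x : ℝ^p`. -/
noncomputable def eval {p : ℕ} : DTree p → (Fin p → ℝ) → ℕ
  | leaf c, _ => c
  | node j t L R, x => if x j ≤ t then L.eval x else R.eval x

/-- Depth `Φ(T)` of a decision tree. -/
def depth {p : ℕ} : DTree p → ℕ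
  | leaf _ => 0
  | node _ _ L R => 1 + max L.depth R.depth

/-- Number of leaves `L(T)` of a decision tree. -/
def leaves {p : ℕ} : DTree p → ℕ
  | leaf _ => 1
  | node _ _ L R => L.leaves + R.leaves

/-- The set of splits `(j, t)` occurring at internal nodes of a tree. -/
def splits {p : ℕ} : DTree p → Set (Fin p × ℝ)
  | leaf _ => ∅
  | node j t L R => insert (j, t) (L.splits ∪ R.splits)

end DTree

/-- A tree ensemble: a finite nonempty family of decision trees with positive weights. -/
structure Ensemble (p : ℕ) : Type where
  m : ℕ
  m_pos : 0 < m
  tree : Fin m → DTree p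
  weight : Fin m → ℝ
  weight_pos : ∀ i, 0 < weight i

namespace Ensemble

/-- Total weight of the trees voting for class `c` at point `x`. -/
noncomputable def score {p : ℕ} (E : Ensemble p) (x : Fin p → ℝ) (c : ℕ) : ℝ :=
  ∑ i ∈ Finset.univ.filter (fun i => (E.tree i).eval x = c), E.weight i

/-- The decision function of the ensemble: the smallest class maximizing the weighted vote. -/
noncomputable def F {p : ℕ} (E : Ensemble p) (x : Fin p → ℝ) : ℕ :=
  sInf {c : ℕ | ∀ c' : ℕ, E.score x c' ≤ E.score x c}

/-- The set `H j` of thresholds appearing in splits on feature `j` in trees of the ensemble. -/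
def H {p : ℕ} (E : Ensemble p) (j : Fin p) : Set ℝ :=
  {t : ℝ | ∃ i, (j, t) ∈ (E.tree i).splits}

end Ensemble

/-- `T` is faithful to the ensemble `E` on the set `S`. -/
def Faithful {p : ℕ} (T : DTree p) (E : Ensemble p) (S : Set (Fin p → ℝ)) : Prop :=
  ∀ x ∈ S, T.eval x = E.F x

/-- The ensemble `𝒯_d` on `ℝ^d` with `2d − 1` unit-weight trees: for each `i < d`, a tree
splitting on feature `i` at threshold `0` with left leaf of class `0` and right leaf of
class `1`; plus `d − 1` single-leaf trees of class `1`. -/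
def axisEnsemble (d : ℕ) (hd : 1 ≤ d) : Ensemble d where
  m := 2 * d - 1
  m_pos := by omega
  tree := fun i =>
    if h : (i : ℕ) < d then DTree.node ⟨i, h⟩ 0 (DTree.leaf 0) (DTree.leaf 1)
    else DTree.leaf 1
  weight := fun _ => 1
  weight_pos := fun _ => one_pos


lemma axis_card_lt (d : ℕ) (hd : 1 ≤ d) :
    ((Finset.univ : Finset (Fin (2*d-1))).filter (fun i : Fin (2*d-1) => (i : ℕ) < d)).card = d := by
  have h : d ≤ 2*d-1 := by omega
  have heq : (Finset.univ : Finset (Fin (2*d-1))).filter (fun i : Fin (2*d-1) => (i : ℕ) < d)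
      = Finset.univ.image (Fin.castLE h) := by
    ext i
    simp only [Finset.mem_filter, Finset.mem_univ, true_and, Finset.mem_image]
    constructor
    · intro hi; exact ⟨⟨i, hi⟩, Fin.ext rfl⟩
    · rintro ⟨a, -, rfl⟩; exact a.isLt
  rw [heq, Finset.card_image_of_injective _ (Fin.castLE_injective h), Finset.card_univ,
    Fintype.card_fin]

lemma axis_score (d : ℕ) (hd : 1 ≤ d) (x : Fin d → ℝ) (c : ℕ) :
    (axisEnsemble d hd).score x c =
      ((Finset.univ.filter (fun i : Fin (2*d-1) =>
        (if h : (i:ℕ) < d then (if x ⟨i, h⟩ ≤ 0 then 0 else 1) else 1) = c)).card : ℝ) := by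
  rw [Ensemble.score]
  simp only [axisEnsemble]
  have : ∀ i : Fin (2*d-1),
      (DTree.eval (if h : (i:ℕ) < d then
          DTree.node ⟨i, h⟩ 0 (DTree.leaf 0) (DTree.leaf 1) else DTree.leaf 1) x)
      = (if h : (i:ℕ) < d then (if x ⟨i, h⟩ ≤ 0 then 0 else 1) else 1) := by
    intro i
    by_cases h : (i:ℕ) < d <;> simp [DTree.eval, h]
  simp [this]
  congr

lemma axis_filter_lt (d : ℕ) (hd : 1 ≤ d) :
    ((Finset.univ : Finset (Fin (2*d-1))).filter (fun i : Fin (2*d-1) => ¬ (i : ℕ) < d)).card = d - 1 := by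
  have h1 : ((Finset.univ : Finset (Fin (2*d-1))).filter (fun i : Fin (2*d-1) => (i : ℕ) < d)).card
      + ((Finset.univ : Finset (Fin (2*d-1))).filter (fun i : Fin (2*d-1) => ¬ (i : ℕ) < d)).card
      = (Finset.univ : Finset (Fin (2*d-1))).card := by
    simpa using Finset.card_filter_add_card_filter_not
      (s := (Finset.univ : Finset (Fin (2*d-1)))) (p := fun i : Fin (2*d-1) => (i : ℕ) < d)
  have h2 := axis_card_lt d hd
  have h3 : (Finset.univ : Finset (Fin (2*d-1))).card = 2*d-1 := by
    simp
  omega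

lemma axis_F_zero (d : ℕ) (hd : 1 ≤ d) (x : Fin d → ℝ) (hx : ∀ i, x i ≤ 0) :
    (axisEnsemble d hd).F x = 0 := by
  have hval : ∀ i : Fin (2*d-1),
      (if h : (i:ℕ) < d then (if x ⟨i, h⟩ ≤ 0 then (0:ℕ) else 1) else 1)
      = if (i:ℕ) < d then 0 else 1 := by
    intro i
    by_cases h : (i:ℕ) < d <;> simp [h, hx]
  have hsc : ∀ c, (axisEnsemble d hd).score x c ≤ (axisEnsemble d hd).score x 0 := by
    intro c
    rw [axis_score, axis_score]
    apply Nat.cast_le.mpr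
    by_cases hc : c = 0
    · subst hc; exact le_refl _
    · have hsub : (Finset.univ.filter (fun i : Fin (2*d-1) =>
          (if h : (i:ℕ) < d then (if x ⟨i, h⟩ ≤ 0 then (0:ℕ) else 1) else 1) = c))
          ⊆ Finset.univ.filter (fun i : Fin (2*d-1) => ¬ (i : ℕ) < d) := by
        intro i hi
        simp only [Finset.mem_filter, Finset.mem_univ, true_and, hval] at hi ⊢
        intro hlt
        rw [if_pos hlt] at hi
        exact hc hi.symm
      have h0 : (Finset.univ.filter (fun i : Fin (2*d-1) =>
          (if h : (i:ℕ) < d then (if x ⟨i, h⟩ ≤ 0 then (0:ℕ) else 1) else 1) = 0))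
          = Finset.univ.filter (fun i : Fin (2*d-1) => (i : ℕ) < d) := by
        ext i
        simp only [Finset.mem_filter, Finset.mem_univ, true_and, hval]
        by_cases h : (i:ℕ) < d <;> simp [h]
      calc _ ≤ (Finset.univ.filter (fun i : Fin (2*d-1) => ¬ (i : ℕ) < d)).card :=
            Finset.card_le_card hsub
        _ = d - 1 := axis_filter_lt d hd
        _ ≤ d := by omega
        _ = _ := by rw [h0, axis_card_lt d hd]
  rw [Ensemble.F]
  exact Nat.sInf_eq_zero.mpr (Or.inl hsc)

lemma axis_F_one (d : ℕ) (hd : 1 ≤ d) (x : Fin d → ℝ) (j : Fin d) (hj : 0 < x j) :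
    (axisEnsemble d hd).F x = 1 := by
  set jj : Fin (2*d-1) := ⟨(j:ℕ), by omega⟩ with hjj
  have hjlt : ((jj:ℕ)) < d := j.isLt
  have hxjj : ¬ x ⟨(jj:ℕ), hjlt⟩ ≤ 0 := by
    have : (⟨(jj:ℕ), hjlt⟩ : Fin d) = j := Fin.ext rfl
    rw [this]; linarith
  -- card of class-1 voters ≥ d
  have hc1 : d ≤ (Finset.univ.filter (fun i : Fin (2*d-1) =>
      (if h : (i:ℕ) < d then (if x ⟨i, h⟩ ≤ 0 then (0:ℕ) else 1) else 1) = 1)).card := by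
    have hsub : insert jj (Finset.univ.filter (fun i : Fin (2*d-1) => ¬ (i : ℕ) < d))
        ⊆ Finset.univ.filter (fun i : Fin (2*d-1) =>
          (if h : (i:ℕ) < d then (if x ⟨i, h⟩ ≤ 0 then (0:ℕ) else 1) else 1) = 1) := by
      intro i hi
      rcases Finset.mem_insert.mp hi with h | h
      · subst h
        simp only [Finset.mem_filter, Finset.mem_univ, true_and]
        rw [dif_pos hjlt, if_neg hxjj]
      · simp only [Finset.mem_filter, Finset.mem_univ, true_and] at h ⊢
        rw [dif_neg h]
    have hnot : jj ∉ Finset.univ.filter (fun i : Fin (2*d-1) => ¬ (i : ℕ) < d) := by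
      simp [hjlt]
    calc d = (d - 1) + 1 := by omega
      _ = (insert jj (Finset.univ.filter (fun i : Fin (2*d-1) => ¬ (i : ℕ) < d))).card := by
          rw [Finset.card_insert_of_notMem hnot, axis_filter_lt d hd]
      _ ≤ _ := Finset.card_le_card hsub
  -- card of class-0 voters ≤ d - 1
  have hc0 : (Finset.univ.filter (fun i : Fin (2*d-1) =>
      (if h : (i:ℕ) < d then (if x ⟨i, h⟩ ≤ 0 then (0:ℕ) else 1) else 1) = 0)).card ≤ d - 1 := by
    have hsub : (Finset.univ.filter (fun i : Fin (2*d-1) =>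
        (if h : (i:ℕ) < d then (if x ⟨i, h⟩ ≤ 0 then (0:ℕ) else 1) else 1) = 0))
        ⊆ (Finset.univ.filter (fun i : Fin (2*d-1) => (i : ℕ) < d)).erase jj := by
      intro i hi
      simp only [Finset.mem_filter, Finset.mem_univ, true_and] at hi
      by_cases h : (i:ℕ) < d
      · rw [dif_pos h] at hi
        apply Finset.mem_erase.mpr
        constructor
        · intro heq
          subst heq
          rw [if_neg hxjj] at hi
          exact one_ne_zero hi
        · simp [h]
      · rw [dif_neg h] at hi
        exact absurd hi one_ne_zero
    calc _ ≤ ((Finset.univ.filter (fun i : Fin (2*d-1) => (i : ℕ) < d)).erase jj).card :=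
          Finset.card_le_card hsub
      _ = d - 1 := by
          rw [Finset.card_erase_of_mem (by simp [hjlt]), axis_card_lt d hd]
  -- c ≥ 2 voters: none
  have hc2 : ∀ c : ℕ, c ≠ 0 → c ≠ 1 → (Finset.univ.filter (fun i : Fin (2*d-1) =>
      (if h : (i:ℕ) < d then (if x ⟨i, h⟩ ≤ 0 then (0:ℕ) else 1) else 1) = c)) = ∅ := by
    intro c hc0' hc1'
    apply Finset.filter_false_of_mem
    intro i _
    by_cases h : (i:ℕ) < d
    · rw [dif_pos h]
      by_cases h2 : x ⟨i, h⟩ ≤ 0 <;> simp [h2, Ne.symm hc0', Ne.symm hc1']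
    · rw [dif_neg h]; exact Ne.symm hc1'
  have hmem1 : 1 ∈ {c : ℕ | ∀ c', (axisEnsemble d hd).score x c' ≤ (axisEnsemble d hd).score x 1} := by
    intro c'
    rw [axis_score, axis_score]
    apply Nat.cast_le.mpr
    by_cases h0 : c' = 0
    · subst h0; omega
    · by_cases h1 : c' = 1
      · subst h1; exact le_refl _
      · rw [hc2 c' h0 h1]; simp
  have hnot0 : (0:ℕ) ∉ {c : ℕ | ∀ c', (axisEnsemble d hd).score x c' ≤ (axisEnsemble d hd).score x 0} := by
    intro h
    have := h 1
    rw [axis_score, axis_score] at this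
    have := Nat.cast_le.mp this
    omega
  rw [Ensemble.F]
  have hne : {c : ℕ | ∀ c', (axisEnsemble d hd).score x c' ≤ (axisEnsemble d hd).score x c}.Nonempty :=
    ⟨1, hmem1⟩
  have hmemInf := Nat.sInf_mem hne
  have hle : sInf {c : ℕ | ∀ c', (axisEnsemble d hd).score x c' ≤ (axisEnsemble d hd).score x c} ≤ 1 :=
    Nat.sInf_le hmem1
  have hne0 : sInf {c : ℕ | ∀ c', (axisEnsemble d hd).score x c' ≤ (axisEnsemble d hd).score x c} ≠ 0 := by
    intro h
    rw [h] at hmemInf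
    exact hnot0 hmemInf
  omega

open Classical in
lemma axis_depth_ge (d : ℕ) : ∀ T : DTree d, ∀ s : Finset (Fin d),
    (∀ x : Fin d → ℝ, (∀ i, 0 ≤ x i) → (∀ i ∉ s, x i = 0) →
      T.eval x = if ∀ i, x i ≤ 0 then 0 else 1) → s.card ≤ T.depth := by
  intro T
  induction T with
  | leaf c =>
    intro s hs
    by_contra hcard
    have hpos : 0 < s.card := by
      simp only [DTree.depth] at hcard; omega
    obtain ⟨j, hj⟩ := Finset.card_pos.mp hpos
    have h0 := hs (fun _ => 0) (fun i => le_refl 0) (fun i _ => rfl)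
    have h1 := hs (fun i => if i = j then 1 else 0)
      (fun i => by by_cases h : i = j <;> simp [h])
      (fun i hi => by
        have hne : i ≠ j := fun heq => hi (heq ▸ hj)
        simp [hne])
    simp only [DTree.eval] at h0 h1
    rw [if_pos (fun i => le_refl 0)] at h0
    rw [if_neg (by push_neg; exact ⟨j, by simp⟩)] at h1
    omega
  | node j t L R ihL ihR =>
    intro s hs
    by_cases ht : 0 ≤ t
    · have hL : (s.erase j).card ≤ L.depth := by
        apply ihL
        intro x hxn hxs
        have hxj : x j = 0 := hxs j (Finset.notMem_erase j s)
        have h := hs x hxn (fun i hi => hxs i (fun hmem => hi (Finset.mem_of_mem_erase hmem)))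
        simp only [DTree.eval] at h
        rwa [if_pos (by rw [hxj]; exact ht)] at h
      have hcard : s.card ≤ (s.erase j).card + 1 := by
        by_cases hjs : j ∈ s
        · rw [Finset.card_erase_of_mem hjs]; omega
        · rw [Finset.erase_eq_of_notMem hjs]; omega
      have : L.depth ≤ max L.depth R.depth := le_max_left _ _
      simp only [DTree.depth]
      omega
    · have hR : s.card ≤ R.depth := by
        apply ihR
        intro x hxn hxs
        have h := hs x hxn hxs
        have hxj : ¬ x j ≤ t := by
          push_neg at ht
          have := hxn j
          linarith
        simp only [DTree.eval] at h
        rwa [if_neg hxj] at h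
      have : R.depth ≤ max L.depth R.depth := le_max_right _ _
      simp only [DTree.depth]
      omega


/-- Every decision tree faithful to `𝒯_d` on `ℝ^d` has depth at least `d`;
moreover the sum of the depths of the trees of `𝒯_d` equals `d`, so the worst-case bound
`Φ(T) ≤ Σ_t Φ(t)` is tight. -/
theorem axis_ensemble_depth_tight (d : ℕ) (hd : 1 ≤ d) :
    (∀ T : DTree d, Faithful T (axisEnsemble d hd) Set.univ → d ≤ T.depth) ∧
    (∑ i, ((axisEnsemble d hd).tree i).depth = d) := by
  constructor
  · intro T hT
    have key := axis_depth_ge d T Finset.univ ?_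
    · simpa using key
    · intro x hxn hxs
      rw [hT x (Set.mem_univ x)]
      by_cases hx : ∀ i, x i ≤ 0
      · rw [if_pos hx, axis_F_zero d hd x hx]
      · rw [if_neg hx]
        push_neg at hx
        obtain ⟨j, hj⟩ := hx
        exact axis_F_one d hd x j hj
  · have hdep : ∀ i : Fin (2*d-1),
        ((axisEnsemble d hd).tree i).depth = if (i:ℕ) < d then 1 else 0 := by
      intro i
      by_cases h : (i:ℕ) < d <;> simp [axisEnsemble, DTree.depth, h]
    show ∑ i : Fin (2*d-1), ((axisEnsemble d hd).tree i).depth = d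
    rw [Finset.sum_congr rfl (fun i _ => hdep i), Finset.sum_ite, Finset.sum_const,
      Finset.sum_const_zero, smul_eq_mul, mul_one, add_zero, axis_card_lt d hd]
end

section
/- Let d ≥ 1 and let T be a decision tree on ℝ^d such that F_T(x) = 0 whenever x_i ≤ 0 for all i ∈ {1,…,d}, and F_T(x) = 1 otherwise. Then the depth of T satisfies Φ(T) ≥ d. -/
lemma depth_aux {d : ℕ} (T : DTree d) : ∀ (x : Fin d → ℝ) (A : Finset (Fin d)),
    (∀ j ∈ A, ∃ M : ℝ, ∀ y ≥ M, T.eval (Function.update x j y) ≠ T.eval x) →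
    A.card ≤ T.depth := by
  induction T with
  | leaf c =>
    intro x A h
    have : A = ∅ := by
      by_contra hA
      obtain ⟨j, hj⟩ := Finset.nonempty_of_ne_empty hA
      obtain ⟨M, hM⟩ := h j hj
      exact hM M le_rfl (by simp [DTree.eval])
    simp [this, DTree.depth]
  | node j t L R ihL ihR =>
    intro x A h
    have key : ∀ k ∈ A.erase j, k ≠ j := fun k hk => Finset.ne_of_mem_erase hk
    have hcard : A.card ≤ (A.erase j).card + 1 := by
      calc A.card ≤ (insert j (A.erase j)).card := Finset.card_le_card (by
              intro a ha
              rcases eq_or_ne a j with rfl | hne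
              · exact Finset.mem_insert_self _ _
              · exact Finset.mem_insert_of_mem (Finset.mem_erase.mpr ⟨hne, ha⟩))
        _ ≤ (A.erase j).card + 1 := Finset.card_insert_le _ _
    by_cases hx : x j ≤ t
    · have hL : (A.erase j).card ≤ L.depth := by
        apply ihL x
        intro k hk
        obtain ⟨M, hM⟩ := h k (Finset.mem_of_mem_erase hk)
        refine ⟨M, fun y hy => ?_⟩
        have hxj : Function.update x k y j = x j := Function.update_of_ne (Ne.symm (key k hk)) _ _
        have := hM y hy
        simpa [DTree.eval, hxj, hx] using this
      calc A.card ≤ (A.erase j).card + 1 := hcard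
        _ ≤ L.depth + 1 := by omega
        _ ≤ 1 + max L.depth R.depth := by omega
        _ = (DTree.node j t L R).depth := rfl
    · have hR : (A.erase j).card ≤ R.depth := by
        apply ihR x
        intro k hk
        obtain ⟨M, hM⟩ := h k (Finset.mem_of_mem_erase hk)
        refine ⟨M, fun y hy => ?_⟩
        have hxj : Function.update x k y j = x j := Function.update_of_ne (Ne.symm (key k hk)) _ _
        have := hM y hy
        simpa [DTree.eval, hxj, hx] using this
      calc A.card ≤ (A.erase j).card + 1 := hcard
        _ ≤ R.depth + 1 := by omega
        _ ≤ 1 + max L.depth R.depth := by omega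
        _ = (DTree.node j t L R).depth := rfl

/-- If a decision tree on `ℝ^d` evaluates to `0` exactly on the points with
all coordinates `≤ 0` and to `1` elsewhere, then its depth is at least `d`. -/
theorem conjunction_tree_depth_lower_bound (d : ℕ) (hd : 1 ≤ d) (T : DTree d)
    (h0 : ∀ x : Fin d → ℝ, (∀ i, x i ≤ 0) → T.eval x = 0)
    (h1 : ∀ x : Fin d → ℝ, ¬ (∀ i, x i ≤ 0) → T.eval x = 1) :
    d ≤ T.depth := by
  have := depth_aux T (fun _ => 0) Finset.univ (by
    intro j _
    refine ⟨1, fun y hy hne => ?_⟩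
    have h0' : T.eval (fun _ => 0) = 0 := h0 _ (fun i => le_rfl)
    have h1' : T.eval (Function.update (fun _ => 0) j y) = 1 := by
      apply h1
      intro hall
      have := hall j
      rw [Function.update_self] at this
      linarith
    rw [h0', h1'] at hne
    exact one_ne_zero hne)
  simpa using this
end

section
/- Let 𝒯 = {t_1,…,t_m} be a tree ensemble on ℝ^p. Then there exists a decision tree T faithful to 𝒯 on all of ℝ^p whose number of leaves satisfies L(T) ≤ ∏_{i=1}^m L(t_i). -/
namespace BA

open DTree

def graft {p : ℕ} : DTree p → (ℕ → DTree p) → DTree p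
  | .leaf c, f => f c
  | .node j t L R, f => .node j t (graft L f) (graft R f)

lemma eval_graft {p : ℕ} (T : DTree p) (f : ℕ → DTree p) (x : Fin p → ℝ) :
    (graft T f).eval x = (f (T.eval x)).eval x := by
  induction T with
  | leaf c => rfl
  | node j t L R hL hR =>
      simp only [graft, DTree.eval]
      split <;> simp [*]

lemma leaves_graft_le {p : ℕ} (T : DTree p) (f : ℕ → DTree p) (B : ℕ)
    (hf : ∀ c, (f c).leaves ≤ B) : (graft T f).leaves ≤ T.leaves * B := by
  induction T with
  | leaf c => simpa [graft, DTree.leaves] using hf c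
  | node j t L R hL hR =>
      simp only [graft, DTree.leaves, add_mul]
      omega

def encode : List ℕ → ℕ
  | [] => 0
  | c :: cs => Nat.pair c (encode cs)

lemma encode_inj : ∀ {l1 l2 : List ℕ}, l1.length = l2.length →
    encode l1 = encode l2 → l1 = l2
  | [], [], _, _ => rfl
  | c :: cs, d :: ds, hl, he => by
      simp only [encode] at he
      have h1 := congrArg Nat.unpair he
      simp [Nat.unpair_pair] at h1
      simp only [List.length_cons, add_left_inj] at hl
      rw [h1.1, encode_inj hl h1.2]

def prodL {p : ℕ} : List (DTree p) → DTree p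
  | [] => .leaf 0
  | t :: ts => graft t (fun c => graft (prodL ts) (fun d => .leaf (Nat.pair c d)))

lemma eval_prodL {p : ℕ} (ts : List (DTree p)) (x : Fin p → ℝ) :
    (prodL ts).eval x = encode (ts.map (fun t => t.eval x)) := by
  induction ts with
  | nil => rfl
  | cons t ts ih =>
      simp [prodL, eval_graft, DTree.eval, encode, ih]

lemma leaves_prodL_le {p : ℕ} (ts : List (DTree p)) :
    (prodL ts).leaves ≤ (ts.map DTree.leaves).prod := by
  induction ts with
  | nil => simp [prodL, DTree.leaves]
  | cons t ts ih =>
      have h1 : (prodL (t :: ts)).leaves ≤ t.leaves * (prodL ts).leaves := by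
        apply leaves_graft_le
        intro c
        have := leaves_graft_le (prodL ts) (fun d => .leaf (Nat.pair c d)) 1
          (fun d => le_refl _)
        simpa using this
      calc (prodL (t :: ts)).leaves ≤ t.leaves * (prodL ts).leaves := h1
        _ ≤ t.leaves * (ts.map DTree.leaves).prod := Nat.mul_le_mul_left _ ih
        _ = ((t :: ts).map DTree.leaves).prod := by simp

lemma F_eq_of_evals {p : ℕ} (E : Ensemble p) {x y : Fin p → ℝ}
    (h : ∀ i, (E.tree i).eval x = (E.tree i).eval y) : E.F x = E.F y := by
  have hs : E.score x = E.score y := by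
    funext c
    unfold Ensemble.score
    apply Finset.sum_congr
    · ext i; simp [h i]
    · intros; rfl
  unfold Ensemble.F
  rw [hs]

end BA
/-- There exists a decision tree faithful to the ensemble on all of `ℝ^p`
whose number of leaves is at most the product of the numbers of leaves of its trees. -/
theorem born_again_leaves_upper_bound {p : ℕ} (E : Ensemble p) :
    ∃ T : DTree p, Faithful T E Set.univ ∧ T.leaves ≤ ∏ i, (E.tree i).leaves := by
  classical
  let ts : List (DTree p) := List.ofFn E.tree
  let g : ℕ → ℕ := fun n =>
    if h : ∃ x : Fin p → ℝ,
        BA.encode (List.ofFn (fun i => (E.tree i).eval x)) = n then E.F h.choose else 0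
  refine ⟨BA.graft (BA.prodL ts) (fun n => .leaf (g n)), ?_, ?_⟩
  · intro x _
    rw [BA.eval_graft, BA.eval_prodL]
    have hmap : ts.map (fun t => t.eval x) = List.ofFn (fun i => (E.tree i).eval x) := by
      simp [ts, List.map_ofFn]; rfl
    rw [hmap]
    show g _ = _
    have hx : ∃ y : Fin p → ℝ,
        BA.encode (List.ofFn fun i => (E.tree i).eval y)
          = BA.encode (List.ofFn fun i => (E.tree i).eval x) := ⟨x, rfl⟩
    simp only [g]
    rw [dif_pos hx]
    have hl : (List.ofFn fun i => (E.tree i).eval hx.choose)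
        = List.ofFn fun i => (E.tree i).eval x :=
      BA.encode_inj (by simp) hx.choose_spec
    exact BA.F_eq_of_evals E fun i => congrFun (List.ofFn_inj.mp hl) i
  · have h1 := BA.leaves_graft_le (BA.prodL ts) (fun n => .leaf (g n)) 1 (fun _ => le_refl _)
    have h2 := BA.leaves_prodL_le ts
    have h3 : (ts.map DTree.leaves).prod = ∏ i, (E.tree i).leaves := by
      simp [ts, List.map_ofFn, List.prod_ofFn]
    omega
end

section
/- Let 𝒯 be a tree ensemble on ℝ^p and, for each feature j, let H_j be the set of thresholds appearing in splits on feature j in trees of 𝒯. For every decision tree T faithful to 𝒯 on ℝ^p there exists a decision tree T′ faithful to 𝒯 on ℝ^p such that every split (j,h) of T′ satisfies h ∈ H_j, and Φ(T′) ≤ Φ(T) and L(T′) ≤ L(T). In particular, an optimal born-again tree can be constructed using exclusively the hyperplanes of the sets H_j. -/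
-- auxiliary
lemma splits_finite {p : ℕ} (T : DTree p) : T.splits.Finite := by
  induction T with
  | leaf c => simp [DTree.splits]
  | node j t L R ihL ihR => simpa [DTree.splits] using (ihL.union ihR).insert (j, t)

lemma H_finite {p : ℕ} (E : Ensemble p) (j : Fin p) : (E.H j).Finite := by
  have : E.H j ⊆ ⋃ i, Prod.snd '' ((E.tree i).splits) := by
    rintro t ⟨i, hi⟩
    exact Set.mem_iUnion.2 ⟨i, ⟨(j, t), hi, rfl⟩⟩
  exact (Set.finite_iUnion (fun i => (splits_finite (E.tree i)).image Prod.snd)).subset this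

noncomputable def Hf {p : ℕ} (E : Ensemble p) (j : Fin p) : Finset ℝ :=
  (H_finite E j).toFinset

lemma mem_Hf {p : ℕ} {E : Ensemble p} {j : Fin p} {t : ℝ} : t ∈ Hf E j ↔ t ∈ E.H j := by
  simp [Hf]

noncomputable def g {p : ℕ} (E : Ensemble p) (j : Fin p) (a : ℝ) : ℝ :=
  if hA : ((Hf E j).filter (fun t => a ≤ t)).Nonempty then
    ((Hf E j).filter (fun t => a ≤ t)).min' hA
  else if hH : (Hf E j).Nonempty then (Hf E j).max' hH + 1 else 0

lemma g_iff {p : ℕ} (E : Ensemble p) (j : Fin p) {h : ℝ} (hh : h ∈ E.H j) (a : ℝ) :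
    a ≤ h ↔ g E j a ≤ h := by
  have hhf : h ∈ Hf E j := mem_Hf.2 hh
  unfold g
  split_ifs with hA hH
  · constructor
    · intro hle
      exact Finset.min'_le _ _ (Finset.mem_filter.2 ⟨hhf, hle⟩)
    · intro hle
      have := (Finset.mem_filter.1 (Finset.min'_mem _ hA)).2
      linarith
  · constructor
    · intro hle
      exact absurd ⟨h, Finset.mem_filter.2 ⟨hhf, hle⟩⟩ hA
    · intro hle
      have := Finset.le_max' _ h hhf
      linarith
  · exact absurd ⟨h, hhf⟩ hH

noncomputable def sig {p : ℕ} (E : Ensemble p) (x : Fin p → ℝ) : Fin p → ℝ :=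
  fun j => g E j (x j)

lemma eval_sig {p : ℕ} {E : Ensemble p} {T : DTree p}
    (hs : ∀ j t, (j, t) ∈ T.splits → t ∈ E.H j) (x : Fin p → ℝ) :
    T.eval (sig E x) = T.eval x := by
  induction T with
  | leaf c => rfl
  | node j t L R ihL ihR =>
    have ht : t ∈ E.H j := hs j t (by simp [DTree.splits])
    have hL : ∀ j' t', (j', t') ∈ L.splits → t' ∈ E.H j' := fun j' t' h' =>
      hs j' t' (by simp [DTree.splits, h'])
    have hR : ∀ j' t', (j', t') ∈ R.splits → t' ∈ E.H j' := fun j' t' h' =>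
      hs j' t' (by simp [DTree.splits, h'])
    simp only [DTree.eval]
    by_cases hx : x j ≤ t
    · rw [if_pos (show sig E x j ≤ t from (g_iff E j ht (x j)).1 hx), if_pos hx]
      exact ihL hL
    · rw [if_neg (show ¬ sig E x j ≤ t from fun hc => hx ((g_iff E j ht (x j)).2 hc)), if_neg hx]
      exact ihR hR

lemma F_sig {p : ℕ} (E : Ensemble p) (x : Fin p → ℝ) : E.F (sig E x) = E.F x := by
  have hsc : ∀ c, E.score (sig E x) c = E.score x c := by
    intro c
    unfold Ensemble.score
    congr 1
    apply Finset.filter_congr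
    intro i _
    have : (E.tree i).eval (sig E x) = (E.tree i).eval x :=
      eval_sig (fun j t ht => ⟨i, ht⟩) x
    simp [this]
  unfold Ensemble.F
  simp only [hsc]

lemma g_trichotomy {p : ℕ} (E : Ensemble p) (j : Fin p) (h : ℝ) :
    (∀ a, g E j a ≤ h) ∨ (∀ a, ¬ g E j a ≤ h) ∨
      (∃ t ∈ E.H j, ∀ a, (g E j a ≤ h ↔ a ≤ t)) := by
  by_cases hH : (Hf E j).Nonempty
  · by_cases hb : ∃ t ∈ Hf E j, t ≤ h
    · by_cases htop : (Hf E j).max' hH + 1 ≤ h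
      · left
        intro a
        unfold g
        split_ifs with hA
        · have hm := Finset.min'_mem _ hA
          have := Finset.le_max' _ _ (Finset.mem_filter.1 hm).1
          linarith
        · exact htop
      · right; right
        obtain ⟨t0, ht0, ht0h⟩ := hb
        set B := (Hf E j).filter (fun t => t ≤ h) with hB
        have hBne : B.Nonempty := ⟨t0, Finset.mem_filter.2 ⟨ht0, ht0h⟩⟩
        set ts := B.max' hBne with hts
        have htsH : ts ∈ Hf E j := (Finset.mem_filter.1 (B.max'_mem hBne)).1
        have htsh : ts ≤ h := (Finset.mem_filter.1 (B.max'_mem hBne)).2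
        refine ⟨ts, mem_Hf.1 htsH, fun a => ?_⟩
        constructor
        · intro hga
          unfold g at hga
          split_ifs at hga with hA
          · have hm := Finset.min'_mem _ hA
            have h1 : a ≤ _ := (Finset.mem_filter.1 hm).2
            have h2 := Finset.le_max' B _ (Finset.mem_filter.2 ⟨(Finset.mem_filter.1 hm).1, hga⟩)
            linarith
          · exact absurd hga htop
        · intro ha
          have : ((Hf E j).filter (fun t => a ≤ t)).Nonempty :=
            ⟨ts, Finset.mem_filter.2 ⟨htsH, ha⟩⟩
          unfold g
          rw [dif_pos this]
          have := Finset.min'_le _ ts (Finset.mem_filter.2 ⟨htsH, ha⟩)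
          linarith
    · right; left
      intro a
      unfold g
      push_neg at hb
      split_ifs with hA
      · have hm := Finset.min'_mem _ hA
        have := hb _ (Finset.mem_filter.1 hm).1
        linarith
      · have := hb _ ((Hf E j).max'_mem hH)
        linarith
  · have hg : ∀ a, g E j a = 0 := by
      intro a
      unfold g
      rw [dif_neg, dif_neg hH]
      intro ⟨t, ht⟩
      exact hH ⟨t, (Finset.mem_filter.1 ht).1⟩
    by_cases h0 : (0:ℝ) ≤ h
    · left; intro a; rw [hg]; exact h0
    · right; left; intro a; rw [hg]; exact h0

lemma leaves_pos {p : ℕ} (T : DTree p) : 1 ≤ T.leaves := by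
  induction T with
  | leaf c => exact le_refl _
  | node j t L R ihL ihR => simp only [DTree.leaves]; omega

lemma main_construction {p : ℕ} (E : Ensemble p) (T : DTree p) :
    ∃ T' : DTree p, (∀ j t, (j, t) ∈ T'.splits → t ∈ E.H j) ∧
      T'.depth ≤ T.depth ∧ T'.leaves ≤ T.leaves ∧
      ∀ x, T'.eval x = T.eval (sig E x) := by
  induction T with
  | leaf c => exact ⟨.leaf c, by simp [DTree.splits], le_refl _, le_refl _, fun x => rfl⟩
  | node j h L R ihL ihR =>
    obtain ⟨L', hLs, hLd, hLl, hLe⟩ := ihL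
    obtain ⟨R', hRs, hRd, hRl, hRe⟩ := ihR
    rcases g_trichotomy E j h with htr | htr | ⟨t, htH, htr⟩
    · refine ⟨L', hLs, ?_, ?_, fun x => ?_⟩
      · calc L'.depth ≤ L.depth := hLd
          _ ≤ (DTree.node j h L R).depth := by
            show L.depth ≤ 1 + max L.depth R.depth; omega
      · calc L'.leaves ≤ L.leaves := hLl
          _ ≤ (DTree.node j h L R).leaves := by
            show L.leaves ≤ L.leaves + R.leaves; omega
      · rw [hLe]
        simp only [DTree.eval]
        rw [if_pos (show sig E x j ≤ h from htr (x j))]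
    · refine ⟨R', hRs, ?_, ?_, fun x => ?_⟩
      · calc R'.depth ≤ R.depth := hRd
          _ ≤ (DTree.node j h L R).depth := by
            show R.depth ≤ 1 + max L.depth R.depth; omega
      · calc R'.leaves ≤ R.leaves := hRl
          _ ≤ (DTree.node j h L R).leaves := by
            show R.leaves ≤ L.leaves + R.leaves; omega
      · rw [hRe]
        simp only [DTree.eval]
        rw [if_neg (show ¬ sig E x j ≤ h from htr (x j))]
    · refine ⟨.node j t L' R', ?_, ?_, ?_, fun x => ?_⟩
      · intro j' t' hmem
        simp only [DTree.splits, Set.mem_insert_iff, Set.mem_union] at hmem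
        rcases hmem with h1 | h1 | h1
        · obtain ⟨h2, h3⟩ := Prod.ext_iff.1 h1
          subst h2; subst h3; exact htH
        · exact hLs j' t' h1
        · exact hRs j' t' h1
      · show 1 + max L'.depth R'.depth ≤ 1 + max L.depth R.depth
        omega
      · show L'.leaves + R'.leaves ≤ L.leaves + R.leaves
        omega
      · simp only [DTree.eval]
        by_cases hx : x j ≤ t
        · rw [if_pos hx, if_pos (show sig E x j ≤ h from (htr (x j)).2 hx), hLe]
        · rw [if_neg hx, if_neg (show ¬ sig E x j ≤ h from fun hc => hx ((htr (x j)).1 hc)), hRe]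


/-- For every decision tree `T` faithful to the ensemble on `ℝ^p`, there is
a decision tree `T'`, faithful to the ensemble on `ℝ^p`, all of whose splits use thresholds
from the ensemble's threshold sets `H j`, with `Φ(T') ≤ Φ(T)` and `L(T') ≤ L(T)`. -/
theorem born_again_uses_ensemble_hyperplanes {p : ℕ} (E : Ensemble p) (T : DTree p)
    (hT : Faithful T E Set.univ) :
    ∃ T' : DTree p, Faithful T' E Set.univ ∧
      (∀ j : Fin p, ∀ t : ℝ, (j, t) ∈ T'.splits → t ∈ E.H j) ∧
      T'.depth ≤ T.depth ∧ T'.leaves ≤ T.leaves := by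
  obtain ⟨T', hs, hd, hl, he⟩ := main_construction E T
  refine ⟨T', fun x _ => ?_, hs, hd, hl⟩
  rw [he x, hT (sig E x) trivial, F_sig]
end

section
/- Let 𝒯 be a tree ensemble on ℝ^p with threshold sets H_j, and let T be a decision tree each of whose splits (j,h) satisfies h ∈ H_j. If for every cell z there exists at least one point x in the open box B(z) with F_T(x) = F_𝒯(x), then T is faithful to 𝒯 on all of ℝ^p. -/
/-- A cell: for each feature `j`, an index in `{0, …, n j}` (0-indexed version of `{1, …, |H_j|+1}`). -/
abbrev Cell {p : ℕ} (n : Fin p → ℕ) : Type := ∀ j, Fin (n j + 1)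

/-- The open box `B(z)` associated with a cell `z`, given for each feature `j` the
increasing enumeration `h j : Fin (n j) → ℝ` of the thresholds: `x j` lies strictly above
every threshold of index `< z j` and strictly below every threshold of index `≥ z j`. -/
def Box {p : ℕ} (n : Fin p → ℕ) (h : ∀ j, Fin (n j) → ℝ) (z : Cell n) : Set (Fin p → ℝ) :=
  {x | ∀ j, (∀ k : Fin (n j), (k : ℕ) < (z j : ℕ) → h j k < x j) ∧
            (∀ k : Fin (n j), (z j : ℕ) ≤ (k : ℕ) → x j < h j k)}

/-- The cell `z` is enclosed in the region `(zL, zR)`. -/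
def Encl {p : ℕ} {n : Fin p → ℕ} (zL zR z : Cell n) : Prop :=
  ∀ j, (zL j : ℕ) ≤ (z j : ℕ) ∧ (z j : ℕ) ≤ (zR j : ℕ)

/-- The subset of `ℝ^p` covered by the region `(zL, zR)`: the union of the boxes of the
cells it encloses. -/
def RegionSet {p : ℕ} (n : Fin p → ℕ) (h : ∀ j, Fin (n j) → ℝ) (zL zR : Cell n) :
    Set (Fin p → ℝ) :=
  ⋃ z ∈ {z : Cell n | Encl zL zR z}, Box n h z

/-- `Φ(zL, zR)`: the minimum depth of a decision tree faithful to `E` on the region `(zL, zR)`. -/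
noncomputable def Phi {p : ℕ} (E : Ensemble p) (n : Fin p → ℕ) (h : ∀ j, Fin (n j) → ℝ)
    (zL zR : Cell n) : ℕ :=
  sInf {d : ℕ | ∃ T : DTree p, Faithful T E (RegionSet n h zL zR) ∧ T.depth = d}

/-- `Λ(zL, zR)`: the minimum number of leaves of a decision tree faithful to `E` on `(zL, zR)`. -/
noncomputable def Lam {p : ℕ} (E : Ensemble p) (n : Fin p → ℕ) (h : ∀ j, Fin (n j) → ℝ)
    (zL zR : Cell n) : ℕ :=
  sInf {d : ℕ | ∃ T : DTree p, Faithful T E (RegionSet n h zL zR) ∧ T.leaves = d}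

/-- `z^R_{jl}`: replace the `j`-th coordinate of `zR` by `l`. -/
def splitR {p : ℕ} {n : Fin p → ℕ} (zR : Cell n) (j : Fin p) (l : Fin (n j)) : Cell n :=
  Function.update zR j l.castSucc

/-- `z^L_{jl}`: replace the `j`-th coordinate of `zL` by `l + 1`. -/
def splitL {p : ℕ} {n : Fin p → ℕ} (zL : Cell n) (j : Fin p) (l : Fin (n j)) : Cell n :=
  Function.update zL j l.succ

/-- The cells `z` and `z'` have the same (weighted majority) class under `E`. -/
def SameClass {p : ℕ} (E : Ensemble p) (n : Fin p → ℕ) (h : ∀ j, Fin (n j) → ℝ)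
    (z z' : Cell n) : Prop :=
  ∀ x ∈ Box n h z, ∀ y ∈ Box n h z', E.F x = E.F y

open Classical in
/-- The indicator `𝟙_{jl}(z^L, z^R)`. -/
noncomputable def ind {p : ℕ} (E : Ensemble p) (n : Fin p → ℕ) (h : ∀ j, Fin (n j) → ℝ)
    (zL zR : Cell n) (j : Fin p) (l : Fin (n j)) : ℕ :=
  if Phi E n h zL (splitR zR j l) = 0 ∧ Phi E n h (splitL zL j l) zR = 0 ∧ SameClass E n h zL zR
  then 0 else 1

lemma eval_congr_aux {p : ℕ} {n : Fin p → ℕ} (h : ∀ j, Fin (n j) → ℝ)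
    (x y : Fin p → ℝ)
    (hxy : ∀ j (k : Fin (n j)), (x j ≤ h j k ↔ y j ≤ h j k)) :
    ∀ T : DTree p, (∀ j t, (j, t) ∈ T.splits → t ∈ Set.range (h j)) →
      T.eval x = T.eval y
  | DTree.leaf c, _ => rfl
  | DTree.node j t L R, hs => by
    obtain ⟨k, hk⟩ := hs j t (by simp [DTree.splits])
    have hL := eval_congr_aux h x y hxy L
      (fun j' t' ht' => hs j' t' (by simp [DTree.splits, ht']))
    have hR := eval_congr_aux h x y hxy R
      (fun j' t' ht' => hs j' t' (by simp [DTree.splits, ht']))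
    subst hk
    simp only [DTree.eval, hxy j k]
    split <;> [exact hL; exact hR]

lemma F_congr_aux {p : ℕ} (E : Ensemble p) {n : Fin p → ℕ} (h : ∀ j, Fin (n j) → ℝ)
    (hcov : ∀ j, E.H j = Set.range (h j)) (x y : Fin p → ℝ)
    (hxy : ∀ j (k : Fin (n j)), (x j ≤ h j k ↔ y j ≤ h j k)) :
    E.F x = E.F y := by
  have heval : ∀ i, (E.tree i).eval x = (E.tree i).eval y := by
    intro i
    refine eval_congr_aux h x y hxy _ (fun j t ht => ?_)
    rw [← hcov j]; exact ⟨i, ht⟩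
  have hscore : ∀ c, E.score x c = E.score y c := by
    intro c
    unfold Ensemble.score
    congr 1
    apply Finset.filter_congr
    intro i _
    simp [heval i]
  unfold Ensemble.F
  congr 1
  ext c
  simp [hscore]

/-- Let `h j` be the increasing enumeration of the ensemble's threshold set
`H j` for each feature `j`, and let `T` be a decision tree all of whose splits use thresholds
from the sets `H j`. If for every cell `z` there is at least one point `x` of the open box
`B(z)` with `F_T(x) = F_𝒯(x)`, then `T` is faithful to the ensemble on all of `ℝ^p`. -/
theorem faithful_of_faithful_on_cells {p : ℕ} (E : Ensemble p) (n : Fin p → ℕ)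
    (h : ∀ j, Fin (n j) → ℝ) (hmono : ∀ j, StrictMono (h j))
    (hcov : ∀ j, E.H j = Set.range (h j))
    (T : DTree p) (hTs : ∀ j : Fin p, ∀ t : ℝ, (j, t) ∈ T.splits → t ∈ E.H j)
    (hcell : ∀ z : Cell n, ∃ x ∈ Box n h z, T.eval x = E.F x) :
    Faithful T E Set.univ := by
  classical
  intro x _
  set z : Cell n := fun j =>
    if hs : (Finset.univ.filter fun k : Fin (n j) => x j ≤ h j k).Nonempty
    then ((Finset.univ.filter fun k : Fin (n j) => x j ≤ h j k).min' hs).castSucc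
    else Fin.last (n j) with hz
  have key : ∀ j (k : Fin (n j)), x j ≤ h j k ↔ (z j : ℕ) ≤ (k : ℕ) := by
    intro j k
    by_cases hs : (Finset.univ.filter fun k : Fin (n j) => x j ≤ h j k).Nonempty
    · simp only [hz, dif_pos hs, Fin.coe_castSucc]
      constructor
      · intro hx
        exact_mod_cast Finset.min'_le _ k (by simp [hx])
      · intro hk
        have hm : x j ≤ h j ((Finset.univ.filter fun k : Fin (n j) => x j ≤ h j k).min' hs) := by
          have := Finset.min'_mem _ hs
          simpa using this
        exact hm.trans ((hmono j).monotone (by exact_mod_cast hk))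
    · simp only [hz, dif_neg hs, Fin.val_last]
      have hnx : ¬ x j ≤ h j k := fun hxk => hs ⟨k, by simp [hxk]⟩
      simp [hnx, Nat.not_le.mpr k.isLt, Nat.lt_irrefl]
  obtain ⟨y, hy, hTy⟩ := hcell z
  have hxy : ∀ j (k : Fin (n j)), (x j ≤ h j k ↔ y j ≤ h j k) := by
    intro j k
    rw [key j k]
    obtain ⟨h1, h2⟩ := hy j
    constructor
    · intro hk
      exact (h2 k hk).le
    · intro hyk
      by_contra hk
      exact absurd hyk (not_le.mpr (h1 k (Nat.lt_of_not_le hk)))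
  calc T.eval x = T.eval y := by
        refine eval_congr_aux h x y hxy T (fun j t ht => ?_)
        rw [← hcov j]; exact hTs j t ht
    _ = E.F y := hTy
    _ = E.F x := (F_congr_aux E h hcov x y hxy).symm
end

section
/- Let 𝒯 be a tree ensemble on ℝ^p and let Λ(z^L,z^R) denote the minimum number of leaves of a decision tree faithful to 𝒯 on the region (z^L,z^R). If (z^L,z^R) and (z̄^L,z̄^R) are two regions such that z^L ≤ z̄^L ≤ z̄^R ≤ z^R componentwise, then Λ(z̄^L,z̄^R) ≤ Λ(z^L,z^R). -/
section AuxConstruction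

variable {p : ℕ} (n : Fin p → ℕ) (h : ∀ j, Fin (n j) → ℝ)

/-- Clip a natural number to `Fin (m+1)`. -/
def clipFin (m : ℕ) (k : ℕ) : Fin (m + 1) := ⟨min k m, by omega⟩

/-- A chain of tests on feature `j` determining the cell index of `x j`. -/
def chainAux (j : Fin p) (cont : Fin (n j + 1) → DTree p) : ℕ → ℕ → DTree p
  | 0, k => cont (clipFin (n j) k)
  | f+1, k =>
    if hk : k < n j then
      DTree.node j (h j ⟨k, hk⟩) (cont (clipFin (n j) k)) (chainAux j cont f (k+1))
    else cont (clipFin (n j) k)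

lemma chainAux_eval (j : Fin p) (cont : Fin (n j + 1) → DTree p)
    (z : Fin (n j + 1)) (x : Fin p → ℝ)
    (hlt : ∀ k : Fin (n j), (k : ℕ) < (z : ℕ) → h j k < x j)
    (hge : ∀ k : Fin (n j), (z : ℕ) ≤ (k : ℕ) → x j < h j k) :
    ∀ f k, k ≤ (z : ℕ) → (z : ℕ) ≤ k + f →
      (chainAux n h j cont f k).eval x = (cont z).eval x := by
  have hzle : (z : ℕ) ≤ n j := by omega
  intro f
  induction f with
  | zero =>
    intro k hk1 hk2
    have hkz : k = (z : ℕ) := by omega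
    have hc : clipFin (n j) k = z := by
      apply Fin.ext; simp [clipFin]; omega
    simp [chainAux, hc]
  | succ f ih =>
    intro k hk1 hk2
    by_cases hk : k < n j
    · by_cases heq : k = (z : ℕ)
      · have hxle : x j ≤ h j ⟨k, hk⟩ := le_of_lt (hge ⟨k, hk⟩ (by simp; omega))
        have hc : clipFin (n j) k = z := by
          apply Fin.ext; simp [clipFin]; omega
        simp [chainAux, hk, DTree.eval, hxle, hc]
      · have hlt' : h j ⟨k, hk⟩ < x j := hlt ⟨k, hk⟩ (by simp; omega)
        have hnle : ¬ x j ≤ h j ⟨k, hk⟩ := not_le.mpr hlt'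
        simp only [chainAux, dif_pos hk, DTree.eval, if_neg hnle]
        exact ih (k+1) (by omega) (by omega)
    · have hkz : k = (z : ℕ) := by omega
      have hc : clipFin (n j) k = z := by
        apply Fin.ext; simp [clipFin]; omega
      simp [chainAux, hk, hc]

/-- Build a tree determining the cell coordinates listed in `ls`, then answering `g`. -/
def buildTree (g : Cell n → ℕ) : List (Fin p) → Cell n → DTree p
  | [], z => DTree.leaf (g z)
  | j :: ls, z => chainAux n h j (fun i => buildTree g ls (Function.update z j i)) (n j) 0

lemma buildTree_eval (g : Cell n → ℕ) :
    ∀ (ls : List (Fin p)) (z z' : Cell n) (x : Fin p → ℝ), x ∈ Box n h z' →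
      (buildTree n h g ls z).eval x = g (fun j => if j ∈ ls then z' j else z j) := by
  intro ls
  induction ls with
  | nil =>
    intro z z' x hx
    simp [buildTree, DTree.eval]
  | cons j ls ih =>
    intro z z' x hx
    have hb := hx j
    rw [buildTree]
    rw [chainAux_eval n h j _ (z' j) x hb.1 hb.2 (n j) 0 (Nat.zero_le _)
      (by have := (z' j).isLt; omega)]
    rw [ih (Function.update z j (z' j)) z' x hx]
    congr 1
    funext i
    by_cases hi : i ∈ ls
    · simp [hi, List.mem_cons]
    · by_cases hij : i = j
      · subst hij; simp [hi, Function.update]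
      · simp [hi, hij, Function.update, List.mem_cons]

lemma box_nonempty (hmono : ∀ j, StrictMono (h j)) (z : Cell n) :
    (Box n h z).Nonempty := by
  classical
  refine ⟨fun j =>
    if hz : (z j : ℕ) = 0 then
      (if hn : 0 < n j then h j ⟨0, hn⟩ - 1 else 0)
    else if hz2 : (z j : ℕ) = n j then
      h j ⟨n j - 1, by omega⟩ + 1
    else
      (h j ⟨(z j : ℕ) - 1, by have := (z j).isLt; omega⟩ +
       h j ⟨(z j : ℕ), by have := (z j).isLt; omega⟩) / 2, ?_⟩
  intro j
  dsimp only
  have hm := hmono j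
  constructor
  · intro k hk
    have hz : (z j : ℕ) ≠ 0 := by omega
    rw [dif_neg hz]
    by_cases hz2 : (z j : ℕ) = n j
    · rw [dif_pos hz2]
      have hle : h j k ≤ h j ⟨n j - 1, by omega⟩ := by
        apply hm.monotone
        show (k : ℕ) ≤ n j - 1
        have := k.isLt; omega
      linarith
    · rw [dif_neg hz2]
      have hle : h j k ≤ h j ⟨(z j : ℕ) - 1, by have := (z j).isLt; omega⟩ := by
        apply hm.monotone
        show (k : ℕ) ≤ (z j : ℕ) - 1
        omega
      have hlt2 : h j ⟨(z j : ℕ) - 1, by have := (z j).isLt; omega⟩ <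
          h j ⟨(z j : ℕ), by have := (z j).isLt; omega⟩ := by
        apply hm
        show (z j : ℕ) - 1 < (z j : ℕ)
        omega
      have := k.isLt
      linarith
  · intro k hk
    have hkn := k.isLt
    by_cases hz : (z j : ℕ) = 0
    · rw [dif_pos hz, dif_pos (by omega : 0 < n j)]
      have hle : h j ⟨0, by omega⟩ ≤ h j k := by
        apply hm.monotone
        show 0 ≤ (k : ℕ); omega
      linarith
    · rw [dif_neg hz]
      have hz2 : (z j : ℕ) ≠ n j := by omega
      rw [dif_neg hz2]
      have hlt2 : h j ⟨(z j : ℕ) - 1, by have := (z j).isLt; omega⟩ <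
          h j ⟨(z j : ℕ), by have := (z j).isLt; omega⟩ := by
        apply hm
        show (z j : ℕ) - 1 < (z j : ℕ); omega
      have hle : h j ⟨(z j : ℕ), by have := (z j).isLt; omega⟩ ≤ h j k := by
        apply hm.monotone
        show (z j : ℕ) ≤ (k : ℕ); omega
      linarith

lemma eval_const_on_box (z : Cell n) (x y : Fin p → ℝ)
    (hx : x ∈ Box n h z) (hy : y ∈ Box n h z) :
    ∀ t : DTree p, (∀ s ∈ t.splits, ∃ k, s.2 = h s.1 k) →
      t.eval x = t.eval y := by
  intro t
  induction t with
  | leaf c => intro _; rfl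
  | node j t L R ihL ihR =>
    intro hs
    have hsL : ∀ s ∈ L.splits, ∃ k, s.2 = h s.1 k := fun s hs' =>
      hs s (by simp [DTree.splits]; right; left; exact hs')
    have hsR : ∀ s ∈ R.splits, ∃ k, s.2 = h s.1 k := fun s hs' =>
      hs s (by simp [DTree.splits]; right; right; exact hs')
    obtain ⟨k0, hk0⟩ := hs (j, t) (by simp [DTree.splits])
    have k : Fin (n j) := k0
    have hk' : t = h j k0 := hk0
    have key : (x j ≤ t) ↔ (y j ≤ t) := by
      rw [hk']
      by_cases hzk : (z j : ℕ) ≤ (k0 : ℕ)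
      · simp [le_of_lt ((hx j).2 k0 hzk), le_of_lt ((hy j).2 k0 hzk)]
      · have hx' := (hx j).1 k0 (by omega)
        have hy' := (hy j).1 k0 (by omega)
        simp [not_le.mpr hx', not_le.mpr hy']
    simp only [DTree.eval]
    by_cases hxy : x j ≤ t
    · rw [if_pos hxy, if_pos (key.mp hxy)]; exact ihL hsL
    · rw [if_neg hxy, if_neg (fun hc => hxy (key.mpr hc))]; exact ihR hsR

lemma F_const_on_box (E : Ensemble p) (hcov : ∀ j, E.H j = Set.range (h j))
    (z : Cell n) (x y : Fin p → ℝ) (hx : x ∈ Box n h z) (hy : y ∈ Box n h z) :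
    E.F x = E.F y := by
  have hev : ∀ i, (E.tree i).eval x = (E.tree i).eval y := by
    intro i
    apply eval_const_on_box n h z x y hx hy
    intro s hs
    have hmem : s.2 ∈ E.H s.1 := ⟨i, by rwa [Prod.mk.eta]⟩
    rw [hcov] at hmem
    obtain ⟨k, hk⟩ := hmem
    exact ⟨k, hk.symm⟩
  have hsc : ∀ c, E.score x c = E.score y c := by
    intro c
    unfold Ensemble.score
    congr 1
    ext i
    simp [hev i]
  unfold Ensemble.F
  congr 1
  ext c
  simp [hsc]

lemma exists_faithful (E : Ensemble p) (hmono : ∀ j, StrictMono (h j))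
    (hcov : ∀ j, E.H j = Set.range (h j)) (zL zR : Cell n) :
    ∃ T : DTree p, Faithful T E (RegionSet n h zL zR) := by
  classical
  have hpick : ∀ z : Cell n, ∃ v, v ∈ Box n h z := fun z => box_nonempty n h hmono z
  choose pick hpick using hpick
  refine ⟨buildTree n h (fun z => E.F (pick z)) (List.finRange p) (fun _ => 0), ?_⟩
  intro x hx
  simp only [RegionSet, Set.mem_iUnion, Set.mem_setOf_eq] at hx
  obtain ⟨z, -, hz⟩ := hx
  rw [buildTree_eval n h _ (List.finRange p) _ z x hz]
  have heq : (fun j => if j ∈ List.finRange p then z j else (0 : Fin (n j + 1))) = z := by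
    funext j; simp [List.mem_finRange]
  rw [heq]
  exact F_const_on_box n h E hcov z (pick z) x (hpick z) hz

end AuxConstruction

/-- If `zL ≤ z̄L ≤ z̄R ≤ zR` componentwise, then the minimum number of
leaves of a faithful tree satisfies `Λ(z̄L, z̄R) ≤ Λ(zL, zR)`. -/
theorem lam_monotone {p : ℕ} (E : Ensemble p) (n : Fin p → ℕ) (h : ∀ j, Fin (n j) → ℝ)
    (hmono : ∀ j, StrictMono (h j)) (hcov : ∀ j, E.H j = Set.range (h j))
    (zL zR zL' zR' : Cell n)
    (h1 : ∀ j, (zL j : ℕ) ≤ (zL' j : ℕ)) (h2 : ∀ j, (zL' j : ℕ) ≤ (zR' j : ℕ))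
    (h3 : ∀ j, (zR' j : ℕ) ≤ (zR j : ℕ)) :
    Lam E n h zL' zR' ≤ Lam E n h zL zR := by
  have hsub : RegionSet n h zL' zR' ⊆ RegionSet n h zL zR := by
    intro x hx
    simp only [RegionSet, Set.mem_iUnion, Set.mem_setOf_eq] at hx ⊢
    obtain ⟨z, hz, hzx⟩ := hx
    exact ⟨z, fun j => ⟨le_trans (h1 j) (hz j).1, le_trans (hz j).2 (h3 j)⟩, hzx⟩
  have hA : ∀ d, d ∈ {d : ℕ | ∃ T : DTree p, Faithful T E (RegionSet n h zL zR) ∧ T.leaves = d} →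
      d ∈ {d : ℕ | ∃ T : DTree p, Faithful T E (RegionSet n h zL' zR') ∧ T.leaves = d} := by
    rintro d ⟨T, hT, hd⟩
    exact ⟨T, fun x hx => hT x (hsub hx), hd⟩
  obtain ⟨T, hT⟩ := exists_faithful n h E hmono hcov zL zR
  have hne : {d : ℕ | ∃ T : DTree p, Faithful T E (RegionSet n h zL zR) ∧ T.leaves = d}.Nonempty :=
    ⟨T.leaves, T, hT, rfl⟩
  exact Nat.sInf_le (hA _ (Nat.sInf_mem hne))
end

section
/- Let 𝒯 be a tree ensemble on ℝ^p, let (z^L,z^R) be a region, and let j be a feature and l a level with z^L_j ≤ l < z^R_j. If T_1 is a decision tree faithful to 𝒯 on the region (z^L, z^R_{jl}) and T_2 is a decision tree faithful to 𝒯 on the region (z^L_{jl}, z^R), then the decision tree whose root splits on feature j with threshold h_{j,l}, with left subtree T_1 and right subtree T_2, is faithful to 𝒯 on the region (z^L, z^R). -/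
/-- If `T₁` is faithful to the ensemble on the region `(zL, zR_{jl})` and
`T₂` is faithful on `(zL_{jl}, zR)`, then the tree splitting at the root on feature `j` with
threshold `h_{j,l}`, with left subtree `T₁` and right subtree `T₂`, is faithful on `(zL, zR)`. -/
theorem split_composition_faithful {p : ℕ} (E : Ensemble p) (n : Fin p → ℕ)
    (h : ∀ j, Fin (n j) → ℝ)
    (hmono : ∀ j, StrictMono (h j)) (hcov : ∀ j, E.H j = Set.range (h j))
    (zL zR : Cell n) (hreg : ∀ j, (zL j : ℕ) ≤ (zR j : ℕ))
    (j : Fin p) (l : Fin (n j)) (hl1 : (zL j : ℕ) ≤ (l : ℕ)) (hl2 : (l : ℕ) < (zR j : ℕ))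
    (T1 T2 : DTree p)
    (h1 : Faithful T1 E (RegionSet n h zL (splitR zR j l)))
    (h2 : Faithful T2 E (RegionSet n h (splitL zL j l) zR)) :
    Faithful (DTree.node j (h j l) T1 T2) E (RegionSet n h zL zR) := by
  intro x hx
  obtain ⟨z, hz, hbx⟩ := Set.mem_iUnion₂.mp hx
  simp only [DTree.eval]
  by_cases hc : x j ≤ h j l
  · rw [if_pos hc]
    have hzl : (z j : ℕ) ≤ (l : ℕ) := by
      by_contra hcon
      push_neg at hcon
      exact absurd ((hbx j).1 l hcon) (not_lt.mpr hc)
    apply h1 x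
    apply Set.mem_biUnion (s := {z : Cell n | Encl zL (splitR zR j l) z}) _ hbx
    intro j'
    by_cases hj : j' = j
    · subst hj
      simp [splitR, Function.update_self, (hz j').1, hzl]
    · simpa [splitR, Function.update_of_ne hj] using hz j'
  · rw [if_neg hc]
    push_neg at hc
    have hzl : (l : ℕ) < (z j : ℕ) := by
      by_contra hcon
      push_neg at hcon
      exact absurd ((hbx j).2 l hcon) (not_lt.mpr hc.le)
    apply h2 x
    apply Set.mem_biUnion (s := {z : Cell n | Encl (splitL zL j l) zR z}) _ hbx
    intro j'
    by_cases hj : j' = j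
    · subst hj
      simp [splitL, Function.update_self, (hz j').2, Nat.succ_le_of_lt hzl]
    · simpa [splitL, Function.update_of_ne hj] using hz j'
end

section
/- Let P be a 3-CNF propositional formula with k ≥ 1 clauses over variables x_1,…,x_l, and let 𝒯_P be the associated tree ensemble on ℝ^l. Then for every x ∈ ℝ^l, F_{𝒯_P}(x) = 1 if and only if the boolean assignment ν_x satisfies P. Consequently, P is satisfiable if and only if there exists x ∈ ℝ^l with F_{𝒯_P}(x) = 1. -/
/-- A 3-clause over boolean variables indexed by `Fin l`: three literals on three distinct
variables, each literal given by a variable `var i` and a polarity `sign i`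
(`true` for a positive literal). -/
structure Clause (l : ℕ) : Type where
  var : Fin 3 → Fin l
  var_inj : Function.Injective var
  sign : Fin 3 → Bool

/-- A boolean assignment `ν` satisfies the clause iff some literal is satisfied. -/
def Clause.sat {l : ℕ} (C : Clause l) (ν : Fin l → Bool) : Prop :=
  ∃ i : Fin 3, ν (C.var i) = C.sign i

/-- The assignment `ν_x` encoded by `x ∈ ℝ^l` (`ν_x(i) = true` iff `x i > 1/2`) satisfies
the clause. -/
def Clause.satAt {l : ℕ} (C : Clause l) (x : Fin l → ℝ) : Prop :=
  ∃ i : Fin 3, (C.sign i = true ↔ 1 / 2 < x (C.var i))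

/-- A 3-CNF formula with `k ≥ 1` clauses over variables indexed by `Fin l`. -/
structure CNF (l : ℕ) : Type where
  k : ℕ
  k_pos : 0 < k
  clause : Fin k → Clause l

/-- A boolean assignment satisfies the formula iff it satisfies every clause. -/
def CNF.sat {l : ℕ} (P : CNF l) (ν : Fin l → Bool) : Prop :=
  ∀ i, (P.clause i).sat ν

/-- The assignment `ν_x` encoded by `x ∈ ℝ^l` satisfies the formula. -/
def CNF.satAt {l : ℕ} (P : CNF l) (x : Fin l → ℝ) : Prop :=
  ∀ i, (P.clause i).satAt x

/-- Leaf of the clause tree corresponding to the assignment `a` of the three clause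
variables: class `1` (True) unless `a` falsifies the clause, in which case class `0`. -/
def litLeaf {l : ℕ} (C : Clause l) (a : Fin 3 → Bool) : DTree l :=
  DTree.leaf (if ∃ i : Fin 3, a i = C.sign i then 1 else 0)

/-- The complete depth-3 decision tree of a clause: it splits successively on the three
variables of the clause, each with threshold `1/2` (left = False, right = True); its eight
leaves are labeled `1` except the unique leaf corresponding to the falsifying assignment,
which is labeled `0`. -/
noncomputable def clauseTree {l : ℕ} (C : Clause l) : DTree l :=
  DTree.node (C.var 0) (1 / 2)
    (DTree.node (C.var 1) (1 / 2)
      (DTree.node (C.var 2) (1 / 2)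
        (litLeaf C ![false, false, false]) (litLeaf C ![false, false, true]))
      (DTree.node (C.var 2) (1 / 2)
        (litLeaf C ![false, true, false]) (litLeaf C ![false, true, true])))
    (DTree.node (C.var 1) (1 / 2)
      (DTree.node (C.var 2) (1 / 2)
        (litLeaf C ![true, false, false]) (litLeaf C ![true, false, true]))
      (DTree.node (C.var 2) (1 / 2)
        (litLeaf C ![true, true, false]) (litLeaf C ![true, true, true])))

/-- The tree ensemble `𝒯_P` associated with a 3-CNF formula `P` with `k` clauses:
`2k − 1` unit-weight trees, namely the `k` clause trees together with `k − 1` single-leaf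
trees of class `0` (False). -/
noncomputable def cnfEnsemble {l : ℕ} (P : CNF l) : Ensemble l where
  m := 2 * P.k - 1
  m_pos := by have := P.k_pos; omega
  tree := fun i =>
    if h : (i : ℕ) < P.k then clauseTree (P.clause ⟨i, h⟩) else DTree.leaf 0
  weight := fun _ => 1
  weight_pos := fun _ => one_pos

open scoped Classical

lemma exists_fin3 (p : Fin 3 → Prop) : (∃ i, p i) ↔ p 0 ∨ p 1 ∨ p 2 := by
  constructor
  · rintro ⟨i, hi⟩; fin_cases i <;> tauto
  · rintro (h|h|h) <;> exact ⟨_, h⟩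

lemma clauseTree_eval {l : ℕ} (C : Clause l) (x : Fin l → ℝ) :
    (clauseTree C).eval x = if C.satAt x then 1 else 0 := by
  have key : C.satAt x ↔ ∃ i, (decide (1/2 < x (C.var i))) = C.sign i := by
    unfold Clause.satAt
    refine exists_congr fun i => ?_
    cases hs : C.sign i <;> by_cases h : 1/2 < x (C.var i) <;> simp [h]
  rw [key]
  by_cases h0 : (2:ℝ)⁻¹ < x (C.var 0) <;> by_cases h1 : (2:ℝ)⁻¹ < x (C.var 1) <;>
    by_cases h2 : (2:ℝ)⁻¹ < x (C.var 2) <;>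
    simp [clauseTree, DTree.eval, litLeaf, ← not_lt, h0, h1, h2, exists_fin3]

lemma eval_mem {l : ℕ} (P : CNF l) (x : Fin l → ℝ) (i : Fin (cnfEnsemble P).m) :
    ((cnfEnsemble P).tree i).eval x = 0 ∨ ((cnfEnsemble P).tree i).eval x = 1 := by
  by_cases h : (i : ℕ) < P.k
  · have ht : (cnfEnsemble P).tree i = clauseTree (P.clause ⟨i, h⟩) := dif_pos h
    rw [ht, clauseTree_eval]
    by_cases hs : (P.clause ⟨i, h⟩).satAt x <;> simp [hs]
  · have ht : (cnfEnsemble P).tree i = DTree.leaf 0 := dif_neg h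
    rw [ht]; left; rfl

lemma score_one {l : ℕ} (P : CNF l) (x : Fin l → ℝ) :
    (cnfEnsemble P).score x 1 = ∑ j : Fin P.k, if (P.clause j).satAt x then (1:ℝ) else 0 := by
  classical
  set g : ℕ → ℝ := fun n =>
    if h : n < P.k then (if (P.clause ⟨n, h⟩).satAt x then (1:ℝ) else 0) else 0 with hg
  have hterm : ∀ i : Fin (cnfEnsemble P).m,
      (if ((cnfEnsemble P).tree i).eval x = 1 then (1:ℝ) else 0) = g i := by
    intro i
    show (if (if h : (i : ℕ) < P.k then clauseTree (P.clause ⟨i, h⟩)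
        else DTree.leaf 0).eval x = 1 then (1:ℝ) else 0) = g i
    by_cases h : (i : ℕ) < P.k
    · rw [dif_pos h, clauseTree_eval, hg]
      by_cases hs : (P.clause ⟨i, h⟩).satAt x <;> simp [hs, h]
    · rw [dif_neg h, hg]
      simp [DTree.eval, h]
  unfold Ensemble.score
  rw [Finset.sum_filter]
  calc ∑ i : Fin (cnfEnsemble P).m,
        (if ((cnfEnsemble P).tree i).eval x = 1 then (cnfEnsemble P).weight i else 0)
      = ∑ i : Fin (cnfEnsemble P).m, g i :=
        Finset.sum_congr rfl fun i _ => hterm i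
    _ = ∑ n ∈ Finset.range (cnfEnsemble P).m, g n := Fin.sum_univ_eq_sum_range g _
    _ = ∑ n ∈ Finset.range P.k, g n := by
        refine (Finset.sum_subset (Finset.range_subset_range.mpr ?_) fun n _ hn => ?_).symm
        · show P.k ≤ 2 * P.k - 1; have := P.k_pos; omega
        · rw [Finset.mem_range, not_lt] at hn
          simp [hg, Nat.not_lt.mpr hn]
    _ = ∑ j : Fin P.k, g j := (Fin.sum_univ_eq_sum_range g _).symm
    _ = ∑ j : Fin P.k, if (P.clause j).satAt x then (1:ℝ) else 0 := by
        refine Finset.sum_congr rfl fun j _ => ?_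
        simp [hg, j.isLt]

lemma score_zero_add {l : ℕ} (P : CNF l) (x : Fin l → ℝ) :
    (cnfEnsemble P).score x 0 + (cnfEnsemble P).score x 1 = ((2 * P.k - 1 : ℕ) : ℝ) := by
  classical
  unfold Ensemble.score
  rw [Finset.sum_filter, Finset.sum_filter, ← Finset.sum_add_distrib]
  have : ∀ i : Fin (cnfEnsemble P).m,
      ((if ((cnfEnsemble P).tree i).eval x = 0 then (cnfEnsemble P).weight i else 0) +
       (if ((cnfEnsemble P).tree i).eval x = 1 then (cnfEnsemble P).weight i else 0)) = 1 := by
    intro i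
    rcases eval_mem P x i with h | h <;> simp only [h] <;> norm_num <;> rfl
  rw [Finset.sum_congr rfl fun i _ => this i]
  simp [cnfEnsemble]
  exact Finset.card_univ.trans (Fintype.card_fin _)

lemma score_other {l : ℕ} (P : CNF l) (x : Fin l → ℝ) (c : ℕ) (hc0 : c ≠ 0) (hc1 : c ≠ 1) :
    (cnfEnsemble P).score x c = 0 := by
  classical
  unfold Ensemble.score
  rw [Finset.filter_eq_empty_iff.mpr, Finset.sum_empty]
  intro i _
  rcases eval_mem P x i with h | h <;> rw [h] <;> omega
/-- For every `x ∈ ℝ^l`, `F_{𝒯_P}(x) = 1` iff the boolean assignment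
encoded by `x` satisfies `P`; consequently `P` is satisfiable iff there exists `x` with
`F_{𝒯_P}(x) = 1`. -/
theorem cnf_ensemble_decision_function {l : ℕ} (P : CNF l) :
    (∀ x : Fin l → ℝ, ((cnfEnsemble P).F x = 1 ↔ P.satAt x)) ∧
    ((∃ ν : Fin l → Bool, P.sat ν) ↔ ∃ x : Fin l → ℝ, (cnfEnsemble P).F x = 1) := by
  classical
  have hk := P.k_pos
  have hcast : ((2 * P.k - 1 : ℕ) : ℝ) = 2 * (P.k : ℝ) - 1 := by
    push_cast [Nat.cast_sub (by omega : 1 ≤ 2 * P.k)]; ring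
  have main : ∀ x : Fin l → ℝ, ((cnfEnsemble P).F x = 1 ↔ P.satAt x) := by
    intro x
    set s := ∑ j : Fin P.k, if (P.clause j).satAt x then (1:ℝ) else 0 with hs
    have h1 : (cnfEnsemble P).score x 1 = s := score_one P x
    have h0 : (cnfEnsemble P).score x 0 = 2 * (P.k : ℝ) - 1 - s := by
      have := score_zero_add P x
      rw [hcast, h1] at this; linarith
    constructor
    · intro hF
      by_contra hx
      unfold CNF.satAt at hx
      push_neg at hx
      obtain ⟨j, hj⟩ := hx
      have hsle : s ≤ (P.k : ℝ) - 1 := by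
        have h1' : s = (∑ i ∈ Finset.univ.erase j,
            if (P.clause i).satAt x then (1:ℝ) else 0) +
            (if (P.clause j).satAt x then (1:ℝ) else 0) :=
          (Finset.sum_erase_add _ _ (Finset.mem_univ j)).symm
        rw [if_neg hj, add_zero] at h1'
        have hb : (∑ i ∈ Finset.univ.erase j,
            if (P.clause i).satAt x then (1:ℝ) else 0) ≤
            (Finset.univ.erase j).card • (1:ℝ) := by
          refine Finset.sum_le_card_nsmul _ _ _ fun i _ => ?_
          split <;> norm_num
        rw [Finset.card_erase_of_mem (Finset.mem_univ j), Finset.card_univ,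
          Fintype.card_fin] at hb
        rw [h1']
        refine le_trans hb (le_of_eq ?_)
        rw [nsmul_eq_mul, mul_one, Nat.cast_sub hk, Nat.cast_one]
      have hzero : (cnfEnsemble P).F x = 0 := by
        have h0mem : 0 ∈ {c : ℕ | ∀ c' : ℕ,
            (cnfEnsemble P).score x c' ≤ (cnfEnsemble P).score x 0} := by
          intro c'
          rcases eq_or_ne c' 0 with rfl | hc0
          · exact le_refl _
          rcases eq_or_ne c' 1 with rfl | hc1
          · rw [h0, h1]; linarith
          · rw [score_other P x c' hc0 hc1, h0]
            have : (1:ℝ) ≤ (P.k : ℝ) := by exact_mod_cast hk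
            linarith
        exact Nat.sInf_eq_zero.mpr (Or.inl h0mem)
      rw [hzero] at hF; exact one_ne_zero hF.symm
    · intro hx
      have hsk : s = (P.k : ℝ) := by
        rw [hs]
        rw [Finset.sum_congr rfl fun j _ => if_pos (hx j)]
        simp
      have h1mem : 1 ∈ {c : ℕ | ∀ c' : ℕ,
          (cnfEnsemble P).score x c' ≤ (cnfEnsemble P).score x 1} := by
        intro c'
        rcases eq_or_ne c' 0 with rfl | hc0
        · rw [h0, h1]; linarith
        rcases eq_or_ne c' 1 with rfl | hc1
        · exact le_refl _
        · rw [score_other P x c' hc0 hc1, h1, hsk]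
          exact_mod_cast Nat.zero_le P.k
      have h0nmem : 0 ∉ {c : ℕ | ∀ c' : ℕ,
          (cnfEnsemble P).score x c' ≤ (cnfEnsemble P).score x 0} := by
        intro hmem
        have := hmem 1
        rw [h0, h1, hsk] at this
        linarith
      have hle : (cnfEnsemble P).F x ≤ 1 := Nat.sInf_le h1mem
      have hne : (cnfEnsemble P).F x ≠ 0 := by
        intro h
        rcases Nat.sInf_eq_zero.mp h with hm | hm
        · exact h0nmem hm
        · exact Set.eq_empty_iff_forall_notMem.mp hm 1 h1mem
      omega
  refine ⟨main, ?_, fun ⟨x, hx⟩ => ?_⟩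
  · rintro ⟨ν, hν⟩
    refine ⟨fun i => if ν i then 1 else 0, (main _).mpr fun i => ?_⟩
    obtain ⟨j, hj⟩ := hν i
    refine ⟨j, ?_⟩
    cases h : ν ((P.clause i).var j) <;> rw [h] at hj <;> simp [← hj, h] <;> norm_num
  · have hsat := (main x).mp hx
    refine ⟨fun i => decide (1/2 < x i), fun i => ?_⟩
    obtain ⟨j, hj⟩ := hsat i
    refine ⟨j, ?_⟩
    cases hsj : (P.clause i).sign j <;> rw [hsj] at hj <;> simp at hj <;> simp [hj]
end
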